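/- Let u = u_1...u_m and v = v_1...v_n be nonempty words over positive integers. Then K^∘(u*v) − K^∘(uv) = ([u] − [u*])·([v] − [v*])·K(u)·K(v), where [w] denotes the value of the regular continued fraction [0; w_1,...,w_k], w* is the reversal of w, and K^∘ is the cyclic regular continuant. -/

import Mathlib

/-- Regular continuant read from the last element: helper on the reversed list. -/
def contKf {R : Type*} [Semiring R] : List R → R
  | [] => 1
  | [a] => a
  | a :: b :: l => a * contKf (b :: l) + contKf l

/-- Regular continuant `K`. -/
def contK {R : Type*} [Semiring R] (l : List R) : R := contKf l.reverse

/-- Cyclic regular continuant: `K∘(x₁…xₙ) = K(x₁…xₙ) + K(x₂…xₙ₋₁)`. -/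
def cycK {R : Type*} [Semiring R] (l : List R) : R := contK l + contK l.tail.dropLast

/-- Value of the regular continued fraction `[0; w₁,…,w_k] = K(w₂…w_k)/K(w₁…w_k)`. -/
def valCF (w : List ℕ) : ℚ := (contK w.tail : ℚ) / (contK w : ℚ)

open Matrix

/-- The list coercion `List ℕ → List ℚ` is `List.map Nat.cast`. -/
lemma coe_list (l : List ℕ) : (↑l : List ℚ) = l.map Nat.cast := by
  show (l >>= fun a => pure (a:ℚ)) = _
  induction l with
  | nil => rfl
  | cons a l ih => simp_all [List.flatMap_cons]

/-- Matrix representation of continuants. -/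
def Pm (l : List ℚ) : Matrix (Fin 2) (Fin 2) ℚ :=
  (l.map fun a => !![a, (1:ℚ); 1, 0]).prod

lemma Pm_nil : Pm [] = 1 := rfl

lemma Pm_cons (a : ℚ) (l : List ℚ) : Pm (a :: l) = !![a, (1:ℚ); 1, 0] * Pm l := by
  simp [Pm]

lemma Pm_append (l₁ l₂ : List ℚ) : Pm (l₁ ++ l₂) = Pm l₁ * Pm l₂ := by
  simp [Pm]

lemma Mt (a : ℚ) : (!![a, (1:ℚ); 1, 0])ᵀ = !![a, (1:ℚ); 1, 0] := by
  ext i j; fin_cases i <;> fin_cases j <;> rfl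

lemma Pm_transpose (l : List ℚ) : (Pm l)ᵀ = Pm l.reverse := by
  induction l with
  | nil => simp [Pm_nil]
  | cons a l ih =>
    rw [Pm_cons, Matrix.transpose_mul, Mt, ih, List.reverse_cons, Pm_append]
    simp [Pm]

lemma Pm_entries (l : List ℚ) :
    Pm l 0 0 = contKf l ∧ Pm l 1 0 = (if l = [] then 0 else contKf l.tail) := by
  induction l with
  | nil => constructor <;> simp [Pm_nil, contKf, Matrix.one_apply]
  | cons a l ih =>
    obtain ⟨h00, h10⟩ := ih
    have hmul00 : Pm (a :: l) 0 0 = a * Pm l 0 0 + Pm l 1 0 := by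
      rw [Pm_cons]; simp [Matrix.mul_apply, Fin.sum_univ_two]
    have hmul10 : Pm (a :: l) 1 0 = Pm l 0 0 := by
      rw [Pm_cons]; simp [Matrix.mul_apply, Fin.sum_univ_two]
    constructor
    · rw [hmul00, h00, h10]
      cases l with
      | nil => simp [contKf]
      | cons b l' => simp [contKf]
    · rw [hmul10, h00]; simp

lemma contKf_eq_contK (l : List ℚ) : contKf l = contK l := by
  have h1 := (Pm_entries l).1
  have h2 := (Pm_entries l.reverse).1
  have h3 : Pm l.reverse 0 0 = Pm l 0 0 := by
    rw [← Pm_transpose]; rfl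
  rw [contK, ← h1, ← h2, h3]

lemma Pm_00 (l : List ℚ) : Pm l 0 0 = contK l := by
  rw [(Pm_entries l).1, contKf_eq_contK]

lemma Pm_10 (l : List ℚ) (h : l ≠ []) : Pm l 1 0 = contK l.tail := by
  rw [(Pm_entries l).2, if_neg h, contKf_eq_contK]

lemma contK_reverse (l : List ℚ) : contK l.reverse = contK l := by
  rw [← Pm_00, ← Pm_00]
  rw [← Pm_transpose]; rfl

lemma Pm_01 (l : List ℚ) (h : l ≠ []) : Pm l 0 1 = contK l.dropLast := by
  have h1 : Pm l 0 1 = Pm l.reverse 1 0 := by rw [← Pm_transpose]; rfl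
  rw [h1, Pm_10 _ (by simpa using h), List.tail_reverse, contK_reverse]

lemma Pm_11 (a : ℚ) (l : List ℚ) (h : l ≠ []) :
    Pm (a :: l) 1 1 = contK (a :: l).tail.dropLast := by
  have h1 : Pm (a :: l) 1 1 = Pm l 0 1 := by
    rw [Pm_cons]; simp [Matrix.mul_apply, Fin.sum_univ_two]
  rw [h1, Pm_01 _ h, List.tail_cons]

lemma cycK_eq (a : ℚ) (l : List ℚ) (h : l ≠ []) :
    cycK (a :: l) = Pm (a :: l) 0 0 + Pm (a :: l) 1 1 := by
  rw [cycK, Pm_00, Pm_11 _ _ h]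

lemma contKf_cast : ∀ (l : List ℕ), ((contKf l : ℕ) : ℚ) = contKf (l.map (Nat.cast))
  | [] => by simp [contKf]
  | [a] => by simp [contKf]
  | a :: b :: l => by
    have h1 := contKf_cast (b :: l)
    have h2 := contKf_cast l
    simp only [contKf, List.map_cons] at *
    push_cast
    rw [h1, h2]

lemma contK_cast (l : List ℕ) : ((contK l : ℕ) : ℚ) = contK (l.map (Nat.cast)) := by
  rw [contK, contK, contKf_cast, List.map_reverse]

lemma contKf_pos : ∀ (l : List ℕ), (∀ i ∈ l, 0 < i) → 0 < contKf l
  | [] => fun _ => by simp [contKf]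
  | [a] => fun h => by simpa [contKf] using h a (by simp)
  | a :: b :: l => fun h => by
    have h1 := contKf_pos (b :: l) (fun i hi => h i (by simp at hi ⊢; tauto))
    have h2 := contKf_pos l (fun i hi => h i (by simp at hi ⊢; tauto))
    have ha := h a (by simp)
    simp only [contKf]
    positivity

lemma contK_pos (l : List ℕ) (h : ∀ i ∈ l, 0 < i) : 0 < contK l :=
  contKf_pos l.reverse (fun i hi => h i (by simpa using hi))

theorem stmt6 (u v : List ℕ) (hu : u ≠ []) (hv : v ≠ [])
    (hpos : ∀ i ∈ u ++ v, 0 < i) :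
    (cycK (u.reverse ++ v) : ℚ) - (cycK (u ++ v) : ℚ) =
      (valCF u - valCF u.reverse) * (valCF v - valCF v.reverse) *
        (contK u : ℚ) * (contK v : ℚ) := by
  set U : List ℚ := u.map Nat.cast with hU
  set V : List ℚ := v.map Nat.cast with hV
  have hUne : U ≠ [] := by simp [hU, hu]
  have hVne : V ≠ [] := by simp [hV, hv]
  -- positivity
  have hKu : Pm U 0 0 ≠ 0 := by
    rw [Pm_00, hU, ← contK_cast]
    have := contK_pos u (fun i hi => hpos i (by simp [hi]))
    positivity
  have hKv : Pm V 0 0 ≠ 0 := by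
    rw [Pm_00, hV, ← contK_cast]
    have := contK_pos v (fun i hi => hpos i (by simp [hi]))
    positivity
  -- valCF in terms of Pm
  have hvalU : valCF u = Pm U 1 0 / Pm U 0 0 := by
    rw [valCF, Pm_10 _ hUne, Pm_00, coe_list, coe_list, hU, List.map_tail]
  have hvalV : valCF v = Pm V 1 0 / Pm V 0 0 := by
    rw [valCF, Pm_10 _ hVne, Pm_00, coe_list, coe_list, hV, List.map_tail]
  have hrevU : Pm U.reverse = (Pm U)ᵀ := (Pm_transpose U).symm
  have hrevV : Pm V.reverse = (Pm V)ᵀ := (Pm_transpose V).symm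
  have hvalU' : valCF u.reverse = Pm U 0 1 / Pm U 0 0 := by
    rw [valCF, coe_list, coe_list, List.map_reverse, List.map_tail, List.map_reverse, ← hU,
      ← Pm_10 _ (by simpa using hUne : U.reverse ≠ []), ← Pm_00, hrevU,
      Matrix.transpose_apply, Matrix.transpose_apply]
  have hvalV' : valCF v.reverse = Pm V 0 1 / Pm V 0 0 := by
    rw [valCF, coe_list, coe_list, List.map_reverse, List.map_tail, List.map_reverse, ← hV,
      ← Pm_10 _ (by simpa using hVne : V.reverse ≠ []), ← Pm_00, hrevV,
      Matrix.transpose_apply, Matrix.transpose_apply]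
  have hcKu : (contK (↑u : List ℚ)) = Pm U 0 0 := by rw [coe_list, ← hU, Pm_00]
  have hcKv : (contK (↑v : List ℚ)) = Pm V 0 0 := by rw [coe_list, ← hV, Pm_00]
  -- cycK in terms of Pm: decompose nonempty lists
  obtain ⟨a, U', hU'⟩ := List.exists_cons_of_ne_nil hUne
  obtain ⟨b, UR', hUR'⟩ := List.exists_cons_of_ne_nil (by simpa using hUne : U.reverse ≠ [])
  have htail1 : U' ++ V ≠ [] := by simp [hVne]
  have htail2 : UR' ++ V ≠ [] := by simp [hVne]
  have e1 : cycK (U.reverse ++ V) = Pm (U.reverse ++ V) 0 0 + Pm (U.reverse ++ V) 1 1 := by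
    rw [hUR', List.cons_append]; exact cycK_eq _ _ htail2
  have e2 : cycK (U ++ V) = Pm (U ++ V) 0 0 + Pm (U ++ V) 1 1 := by
    rw [hU', List.cons_append]; exact cycK_eq _ _ htail1
  have hc1 : (↑(u.reverse ++ v) : List ℚ) = U.reverse ++ V := by
    rw [coe_list, List.map_append, List.map_reverse, hU, hV]
  have hc2 : (↑(u ++ v) : List ℚ) = U ++ V := by
    rw [coe_list, List.map_append, hU, hV]
  rw [hc1, hc2, e1, e2, Pm_append, Pm_append, hrevU, hvalU, hvalV, hvalU', hvalV', hcKu, hcKv]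
  simp only [Matrix.mul_apply, Matrix.transpose_apply, Fin.sum_univ_two]
  field_simp
  ring
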